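/- arXiv:1210.2912 — 4 statements merged into one kernel-verified Lean document; each statement's English description precedes it below -/
import Mathlib

section
/- If Fil and Fil' are filtrations on V satisfying Fil'^i ⊆ Fil^i for all i ∈ ℤ, then t_H(Fil') ≤ t_H(Fil), and equality t_H(Fil') = t_H(Fil) holds if and only if Fil'^i = Fil^i for all i ∈ ℤ. -/
/-- The Hodge number `t_H(Fil) = Σ_{i ∈ ℤ} i · dim_F (Fil^i / Fil^{i+1})` of a decreasing
exhaustive separated filtration on a finite-dimensional vector space; for an antitone
filtration `dim (Fil^i / Fil^{i+1}) = dim Fil^i - dim Fil^{i+1}`, and the sum has finite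
support. -/
noncomputable def hodgeNumber {F V : Type*} [Field F] [AddCommGroup V] [Module F V]
    (Fil : ℤ → Submodule F V) : ℤ :=
  ∑ᶠ i : ℤ, i * ((Module.finrank F (Fil i) : ℤ) - (Module.finrank F (Fil (i + 1)) : ℤ))

private lemma telescope_Icc (f : ℤ → ℤ) (a : ℤ) : ∀ b : ℤ, a ≤ b →
    ∑ i ∈ Finset.Icc a b, (f i - f (i + 1)) = f a - f (b + 1) := by
  refine Int.le_induction ?_ ?_
  · simp
  · intro n hn ih
    have hins : Finset.Icc a (n + 1) = insert (n + 1) (Finset.Icc a n) := by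
      ext x
      simp only [Finset.mem_Icc, Finset.mem_insert]
      omega
    rw [hins, Finset.sum_insert (by simp [Finset.mem_Icc]), ih]
    ring

private lemma hodgeNumber_eq {F V : Type*} [Field F] [AddCommGroup V] [Module F V]
    [FiniteDimensional F V] (Fil : ℤ → Submodule F V) (a b : ℤ) (hab : a ≤ b)
    (hT : ∀ i ≤ a, Fil i = ⊤) (hB : ∀ i, b ≤ i → Fil i = ⊥) :
    hodgeNumber Fil = a * (Module.finrank F V : ℤ) +
      ∑ i ∈ Finset.Icc a b, (Module.finrank F (Fil (i + 1)) : ℤ) := by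
  have hsupp : (Function.support fun i : ℤ =>
      i * ((Module.finrank F (Fil i) : ℤ) - (Module.finrank F (Fil (i + 1)) : ℤ)))
      ⊆ (Finset.Icc a b : Finset ℤ) := by
    intro i hi
    simp only [Function.mem_support, ne_eq] at hi
    simp only [Finset.coe_Icc, Set.mem_Icc]
    by_contra h
    push_neg at h
    apply hi
    rcases le_or_gt i a with h1 | h1
    · rcases lt_or_ge i a with h2 | h2
      · rw [hT i (by omega), hT (i + 1) (by omega)]; ring
      · omega
    · rw [hB i (by omega), hB (i + 1) (by omega)]; ring
  rw [hodgeNumber, finsum_eq_finset_sum_of_support_subset _ hsupp]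
  have : ∀ i ∈ Finset.Icc a b,
      i * ((Module.finrank F (Fil i) : ℤ) - (Module.finrank F (Fil (i + 1)) : ℤ)) =
      (i * (Module.finrank F (Fil i) : ℤ) - (i + 1) * (Module.finrank F (Fil (i + 1)) : ℤ))
        + (Module.finrank F (Fil (i + 1)) : ℤ) := by
    intro i _; ring
  rw [Finset.sum_congr rfl this, Finset.sum_add_distrib,
    telescope_Icc (fun i => i * (Module.finrank F (Fil i) : ℤ)) a b hab]
  rw [hT a le_rfl, hB (b + 1) (by omega)]
  simp [finrank_top]

/-- Let `V` be a finite-dimensional `F`-vector space and let `Fil`, `Fil'`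
be two decreasing, exhaustive, separated filtrations on `V` with `Fil'^i ⊆ Fil^i` for all
`i ∈ ℤ`.  Then `t_H(Fil') ≤ t_H(Fil)`, with equality if and only if `Fil'^i = Fil^i` for
all `i ∈ ℤ`. -/
theorem hodgeNumber_le_of_le
    {F V : Type*} [Field F] [AddCommGroup V] [Module F V] [FiniteDimensional F V]
    (Fil Fil' : ℤ → Submodule F V)
    (hFil : Antitone Fil) (hFil' : Antitone Fil')
    (hFilExh : ∃ n : ℤ, ∀ i ≤ n, Fil i = ⊤) (hFilSep : ∃ n : ℤ, ∀ i, n ≤ i → Fil i = ⊥)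
    (hFil'Exh : ∃ n : ℤ, ∀ i ≤ n, Fil' i = ⊤) (hFil'Sep : ∃ n : ℤ, ∀ i, n ≤ i → Fil' i = ⊥)
    (hle : ∀ i : ℤ, Fil' i ≤ Fil i) :
    hodgeNumber Fil' ≤ hodgeNumber Fil ∧
      (hodgeNumber Fil' = hodgeNumber Fil ↔ ∀ i : ℤ, Fil' i = Fil i) := by
  obtain ⟨n1, hn1⟩ := hFilExh
  obtain ⟨m1, hm1⟩ := hFilSep
  obtain ⟨n2, hn2⟩ := hFil'Exh
  obtain ⟨m2, hm2⟩ := hFil'Sep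
  set a : ℤ := min n1 n2 with ha
  set b : ℤ := max (max m1 m2) a with hb
  have hab : a ≤ b := le_max_right _ _
  have hT : ∀ i ≤ a, Fil i = ⊤ := fun i hi => hn1 i (by omega)
  have hT' : ∀ i ≤ a, Fil' i = ⊤ := fun i hi => hn2 i (by omega)
  have hB : ∀ i, b ≤ i → Fil i = ⊥ := fun i hi => hm1 i (by omega)
  have hB' : ∀ i, b ≤ i → Fil' i = ⊥ := fun i hi => hm2 i (by omega)
  rw [hodgeNumber_eq Fil a b hab hT hB, hodgeNumber_eq Fil' a b hab hT' hB']
  have hterm : ∀ i ∈ Finset.Icc a b,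
      (Module.finrank F (Fil' (i + 1)) : ℤ) ≤ (Module.finrank F (Fil (i + 1)) : ℤ) := by
    intro i _
    exact_mod_cast Submodule.finrank_mono (hle (i + 1))
  constructor
  · exact add_le_add_right (Finset.sum_le_sum hterm) _
  · constructor
    · intro h
      have hsum : ∑ i ∈ Finset.Icc a b, (Module.finrank F (Fil' (i + 1)) : ℤ) =
          ∑ i ∈ Finset.Icc a b, (Module.finrank F (Fil (i + 1)) : ℤ) := by omega
      have heach := (Finset.sum_eq_sum_iff_of_le hterm).mp hsum
      intro j
      rcases le_or_gt j a with hj | hj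
      · rw [hT j hj, hT' j hj]
      · rcases le_or_gt j b with hj2 | hj2
        · have hmem : j - 1 ∈ Finset.Icc a b := Finset.mem_Icc.mpr ⟨by omega, by omega⟩
          have := heach (j - 1) hmem
          have hreq : Module.finrank F (Fil j) ≤ Module.finrank F (Fil' j) := by
            have hj1 : j - 1 + 1 = j := by omega
            rw [hj1] at this
            omega
          exact Submodule.eq_of_le_of_finrank_le (hle j) hreq
        · rw [hB j (by omega), hB' j (by omega)]
    · intro h
      have : Fil' = Fil := funext h
      rw [this]
end

section
/- If D is an admissible filtered (φ,N)-module over K₀ such that the filtered φ-module obtained by endowing (D, φ) with the filtration Filhat is also admissible, then Fil^i = Filhat^i for all i ∈ ℤ; equivalently, the filtration Fil of D satisfies Griffiths transversality N(Fil^i) ⊆ Fil^{i−1} for all i (D is naive). -/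
/-- The Hodge number `t_H` of a subspace `D'` of `D`, for the filtration induced on `D'`
by a filtration `Fil` of `D`:
`t_H = Σ_{i ∈ ℤ} i · dim (Fil^i ∩ D' / Fil^{i+1} ∩ D')`
(for an antitone filtration the dimension of this quotient is the difference of the
dimensions, and the sum has finite support when the filtration is exhaustive and
separated). -/
noncomputable def inducedHodgeNumber {K₀ D : Type*} [Field K₀] [AddCommGroup D]
    [Module K₀ D] (Fil : ℤ → Submodule K₀ D) (D' : Submodule K₀ D) : ℤ :=
  ∑ᶠ i : ℤ, i * ((Module.finrank K₀ ↥(Fil i ⊓ D') : ℤ) -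
    (Module.finrank K₀ ↥(Fil (i + 1) ⊓ D') : ℤ))

/-- Abel summation for finitely supported `f : ℤ → ℤ`. -/
private lemma abel_finsum (f : ℤ → ℤ) (hf : (Function.support f).Finite) :
    ∑ᶠ i : ℤ, (i : ℤ) * (f i - f (i + 1)) = ∑ᶠ i : ℤ, f i := by
  have h1 : (Function.support fun i : ℤ => (i : ℤ) * f i).Finite :=
    hf.subset fun i hi => by
      simp only [Function.mem_support] at hi ⊢; intro h; exact hi (by rw [h, mul_zero])
  have h3 : (Function.support fun i : ℤ => ((i : ℤ) - 1) * f i).Finite :=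
    hf.subset fun i hi => by
      simp only [Function.mem_support] at hi ⊢; intro h; exact hi (by rw [h, mul_zero])
  have h2 : (Function.support fun i : ℤ => (i : ℤ) * f (i + 1)).Finite := by
    have hsub : (Function.support fun i : ℤ => (i : ℤ) * f (i + 1)) ⊆
        (fun i : ℤ => i + 1) ⁻¹' Function.support f := fun i hi => by
      simp only [Function.mem_support, Set.mem_preimage] at hi ⊢
      intro h; exact hi (by rw [h, mul_zero])
    exact ((hf.preimage ((add_left_injective (1 : ℤ)).injOn)).subset hsub)
  calc ∑ᶠ i : ℤ, (i : ℤ) * (f i - f (i + 1))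
      = ∑ᶠ i : ℤ, ((i : ℤ) * f i - (i : ℤ) * f (i + 1)) := finsum_congr fun i => by ring
    _ = (∑ᶠ i : ℤ, (i : ℤ) * f i) - ∑ᶠ i : ℤ, (i : ℤ) * f (i + 1) :=
        finsum_sub_distrib h1 h2
    _ = (∑ᶠ i : ℤ, (i : ℤ) * f i) - ∑ᶠ i : ℤ, ((i : ℤ) - 1) * f i := by
        congr 1
        have h := finsum_comp_equiv (Equiv.addRight (1 : ℤ))
          (f := fun j : ℤ => ((j : ℤ) - 1) * f j)
        rw [← h]
        exact finsum_congr fun i => by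
          simp only [Equiv.coe_addRight, add_sub_cancel_right]
    _ = ∑ᶠ i : ℤ, ((i : ℤ) * f i - ((i : ℤ) - 1) * f i) := (finsum_sub_distrib h1 h3).symm
    _ = ∑ᶠ i : ℤ, f i := finsum_congr fun i => by ring

/-- If two filtrations `G ≤ F` agree (with `⊤` resp. `⊥`) at both ends and have equal
Hodge numbers, they are equal. -/
private lemma filtration_eq_of_hodge_eq {K₀ D : Type*} [Field K₀] [AddCommGroup D]
    [Module K₀ D] [FiniteDimensional K₀ D] (F G : ℤ → Submodule K₀ D)
    (hle : ∀ i, G i ≤ F i) (a c : ℤ)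
    (hFa : ∀ i ≤ a, F i = ⊤) (hGa : ∀ i ≤ a, G i = ⊤)
    (hFc : ∀ i, c ≤ i → F i = ⊥) (hGc : ∀ i, c ≤ i → G i = ⊥)
    (heq : inducedHodgeNumber F ⊤ = inducedHodgeNumber G ⊤) :
    ∀ i, F i = G i := by
  have hFnum : inducedHodgeNumber F ⊤ = ∑ᶠ i : ℤ, (i : ℤ) *
      ((Module.finrank K₀ ↥(F i) : ℤ) - (Module.finrank K₀ ↥(F (i + 1)) : ℤ)) := by
    unfold inducedHodgeNumber
    exact finsum_congr fun i => by rw [inf_top_eq, inf_top_eq]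
  have hGnum : inducedHodgeNumber G ⊤ = ∑ᶠ i : ℤ, (i : ℤ) *
      ((Module.finrank K₀ ↥(G i) : ℤ) - (Module.finrank K₀ ↥(G (i + 1)) : ℤ)) := by
    unfold inducedHodgeNumber
    exact finsum_congr fun i => by rw [inf_top_eq, inf_top_eq]
  have hsF : Function.support (fun i : ℤ => (i : ℤ) *
      ((Module.finrank K₀ ↥(F i) : ℤ) - (Module.finrank K₀ ↥(F (i + 1)) : ℤ)))
      ⊆ Set.Icc a c := by
    intro i hi
    by_contra hic
    apply hi
    simp only [Set.mem_Icc, not_and_or, not_le] at hic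
    show (i : ℤ) * ((Module.finrank K₀ ↥(F i) : ℤ) - (Module.finrank K₀ ↥(F (i + 1)) : ℤ)) = 0
    rcases hic with h | h
    · rw [hFa i h.le, hFa (i + 1) (by omega), sub_self, mul_zero]
    · rw [hFc i h.le, hFc (i + 1) (by omega), sub_self, mul_zero]
  have hsG : Function.support (fun i : ℤ => (i : ℤ) *
      ((Module.finrank K₀ ↥(G i) : ℤ) - (Module.finrank K₀ ↥(G (i + 1)) : ℤ)))
      ⊆ Set.Icc a c := by
    intro i hi
    by_contra hic
    apply hi
    simp only [Set.mem_Icc, not_and_or, not_le] at hic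
    show (i : ℤ) * ((Module.finrank K₀ ↥(G i) : ℤ) - (Module.finrank K₀ ↥(G (i + 1)) : ℤ)) = 0
    rcases hic with h | h
    · rw [hGa i h.le, hGa (i + 1) (by omega), sub_self, mul_zero]
    · rw [hGc i h.le, hGc (i + 1) (by omega), sub_self, mul_zero]
  have hsg : Function.support (fun i : ℤ =>
      (Module.finrank K₀ ↥(F i) : ℤ) - (Module.finrank K₀ ↥(G i) : ℤ)) ⊆ Set.Icc a c := by
    intro i hi
    by_contra hic
    apply hi
    simp only [Set.mem_Icc, not_and_or, not_le] at hic
    show (Module.finrank K₀ ↥(F i) : ℤ) - (Module.finrank K₀ ↥(G i) : ℤ) = 0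
    rcases hic with h | h
    · rw [hFa i h.le, hGa i h.le, sub_self]
    · rw [hFc i h.le, hGc i h.le, sub_self]
  have hfinF := (Set.finite_Icc a c).subset hsF
  have hfinG := (Set.finite_Icc a c).subset hsG
  have hfing := (Set.finite_Icc a c).subset hsg
  have key : ∑ᶠ i : ℤ, ((Module.finrank K₀ ↥(F i) : ℤ) -
      (Module.finrank K₀ ↥(G i) : ℤ)) = 0 := by
    have habel := abel_finsum (fun i : ℤ =>
      (Module.finrank K₀ ↥(F i) : ℤ) - (Module.finrank K₀ ↥(G i) : ℤ)) hfing
    rw [← habel]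
    have hsplit : ∑ᶠ i : ℤ, (i : ℤ) *
          (((Module.finrank K₀ ↥(F i) : ℤ) - (Module.finrank K₀ ↥(G i) : ℤ)) -
           ((Module.finrank K₀ ↥(F (i + 1)) : ℤ) - (Module.finrank K₀ ↥(G (i + 1)) : ℤ)))
        = (∑ᶠ i : ℤ, (i : ℤ) *
            ((Module.finrank K₀ ↥(F i) : ℤ) - (Module.finrank K₀ ↥(F (i + 1)) : ℤ)))
          - ∑ᶠ i : ℤ, (i : ℤ) *
            ((Module.finrank K₀ ↥(G i) : ℤ) - (Module.finrank K₀ ↥(G (i + 1)) : ℤ)) := by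
      rw [← finsum_sub_distrib hfinF hfinG]
      exact finsum_congr fun i => by ring
    rw [hsplit, ← hFnum, ← hGnum, heq, sub_self]
  have hsum : ∑ i ∈ Finset.Icc a c, ((Module.finrank K₀ ↥(F i) : ℤ) -
      (Module.finrank K₀ ↥(G i) : ℤ)) = 0 := by
    rw [← finsum_eq_sum_of_support_subset _ (by rw [Finset.coe_Icc]; exact hsg)]
    exact key
  have hnonneg : ∀ i : ℤ, (0 : ℤ) ≤ (Module.finrank K₀ ↥(F i) : ℤ) -
      (Module.finrank K₀ ↥(G i) : ℤ) := by
    intro i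
    rw [sub_nonneg]
    exact_mod_cast Submodule.finrank_mono (hle i)
  have hzero : ∀ i : ℤ, (Module.finrank K₀ ↥(F i) : ℤ) -
      (Module.finrank K₀ ↥(G i) : ℤ) = 0 := by
    intro i
    by_cases hi : i ∈ Finset.Icc a c
    · exact (Finset.sum_eq_zero_iff_of_nonneg fun j _ => hnonneg j).mp hsum i hi
    · by_contra h
      exact hi (by rw [← Finset.coe_Icc] at hsg; exact_mod_cast hsg h)
  intro i
  have hrk : Module.finrank K₀ ↥(F i) ≤ Module.finrank K₀ ↥(G i) := by
    have h := hzero i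
    rw [sub_eq_zero] at h
    exact_mod_cast h.le
  exact (Submodule.eq_of_le_of_finrank_le (hle i) hrk).symm


/-- Let `K₀` be the fraction field of the Witt vectors of a perfect field
of characteristic `p` (abstracted here as a field of characteristic zero equipped with an
automorphism `σ` and a `p`-adic valuation `v` on nonzero elements satisfying
`v ∘ σ = v` and `v p = 1`).  Let `D` be a filtered `(φ, N)`-module over `K₀`: a
finite-dimensional `K₀`-vector space with an injective `σ`-semilinear `φ`, a nilpotent
`K₀`-linear `N` with `N ∘ φ = p · (φ ∘ N)`, and a decreasing exhaustive separated
filtration `Fil`.  `t_N` of a `φ`-stable subspace is `v (det A)` for `A` the matrix of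
`φ` in any basis; admissibility of a filtration means `t_H(D) = t_N(D)` together with
`t_H(D') ≤ t_N(D')` for every sub-object `D'`.  If `D` (with `Fil`) is admissible as a
filtered `(φ, N)`-module, and `D` endowed with the filtration
`Filhat^i = ⋂_{k ∈ ℕ} (N^k)⁻¹(Fil^{i-k})` is admissible as a filtered `φ`-module, then
`Fil^i = Filhat^i` for all `i ∈ ℤ`; equivalently, `Fil` satisfies Griffiths
transversality `N(Fil^i) ⊆ Fil^{i-1}` for all `i` (i.e. `D` is naive). -/
theorem naive_of_admissible_of_filhat_admissible
    (p : ℕ) (hp : p.Prime)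
    {K₀ : Type*} [Field K₀] [CharZero K₀]
    (σ : K₀ ≃+* K₀) (v : K₀ → ℤ)
    (hv_mul : ∀ x y : K₀, x ≠ 0 → y ≠ 0 → v (x * y) = v x + v y)
    (hvσ : ∀ x : K₀, v (σ x) = v x)
    (hvp : v (p : K₀) = 1)
    {D : Type*} [AddCommGroup D] [Module K₀ D] [FiniteDimensional K₀ D]
    (φ : D →ₛₗ[(σ : K₀ →+* K₀)] D) (hφ : Function.Injective φ)
    (N : D →ₗ[K₀] D) (hN : IsNilpotent N)
    (hNφ : ∀ x : D, N (φ x) = (p : K₀) • φ (N x))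
    (Fil : ℤ → Submodule K₀ D) (hFil : Antitone Fil)
    (hFilExh : ∃ n : ℤ, ∀ i ≤ n, Fil i = ⊤) (hFilSep : ∃ n : ℤ, ∀ i, n ≤ i → Fil i = ⊥)
    -- admissibility of `(D, φ, N, Fil)` as a filtered (φ,N)-module:
    (hadm_eq : ∀ {n : ℕ} (b : Module.Basis (Fin n) K₀ D) (A : Matrix (Fin n) (Fin n) K₀),
      (∀ j, φ (b j) = ∑ i, A i j • b i) → inducedHodgeNumber Fil ⊤ = v A.det)
    (hadm_le : ∀ D' : Submodule K₀ D, (∀ x ∈ D', φ x ∈ D') → (∀ x ∈ D', N x ∈ D') →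
      ∀ {n : ℕ} (b : Module.Basis (Fin n) K₀ ↥D') (A : Matrix (Fin n) (Fin n) K₀),
      (∀ j, φ (b j : D) = ∑ i, A i j • (b i : D)) → inducedHodgeNumber Fil D' ≤ v A.det)
    -- the filtration `Filhat`:
    (Filhat : ℤ → Submodule K₀ D)
    (hFilhat : ∀ i : ℤ, Filhat i = ⨅ k : ℕ, (Fil (i - k)).comap (N ^ k))
    -- admissibility of `(D, φ, Filhat)` as a filtered φ-module:
    (hadm_eq' : ∀ {n : ℕ} (b : Module.Basis (Fin n) K₀ D) (A : Matrix (Fin n) (Fin n) K₀),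
      (∀ j, φ (b j) = ∑ i, A i j • b i) → inducedHodgeNumber Filhat ⊤ = v A.det)
    (hadm_le' : ∀ D' : Submodule K₀ D, (∀ x ∈ D', φ x ∈ D') →
      ∀ {n : ℕ} (b : Module.Basis (Fin n) K₀ ↥D') (A : Matrix (Fin n) (Fin n) K₀),
      (∀ j, φ (b j : D) = ∑ i, A i j • (b i : D)) →
        inducedHodgeNumber Filhat D' ≤ v A.det) :
    (∀ i : ℤ, Fil i = Filhat i) ∧ ∀ i : ℤ, (Fil i).map N ≤ Fil (i - 1) := by
  obtain ⟨a, ha⟩ := hFilExh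
  obtain ⟨c, hc⟩ := hFilSep
  -- a basis of `D` and the matrix of `φ` in it
  let b : Module.Basis (Fin (Module.finrank K₀ D)) K₀ D := Module.finBasis K₀ D
  let A : Matrix (Fin (Module.finrank K₀ D)) (Fin (Module.finrank K₀ D)) K₀ :=
    fun i j => b.repr (φ (b j)) i
  have hA : ∀ j, φ (b j) = ∑ i, A i j • b i := fun j => (b.sum_repr (φ (b j))).symm
  have hEq : inducedHodgeNumber Fil (⊤ : Submodule K₀ D) = inducedHodgeNumber Filhat ⊤ := by
    rw [hadm_eq b A hA, hadm_eq' b A hA]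
  have hle : ∀ i, Filhat i ≤ Fil i := by
    intro i
    have h := (hFilhat i) ▸ iInf_le (fun k : ℕ => (Fil (i - k)).comap (N ^ k)) 0
    simpa [Module.End.one_eq_id, Submodule.comap_id] using h
  have hGtop : ∀ i ≤ a, Filhat i = ⊤ := by
    intro i hi
    rw [hFilhat, eq_top_iff]
    refine le_iInf fun k => ?_
    have hk : (k : ℤ) ≥ 0 := Int.natCast_nonneg k
    rw [ha (i - k) (by omega)]
    simp
  have hGbot : ∀ i, c ≤ i → Filhat i = ⊥ := fun i hi =>
    le_bot_iff.mp ((hle i).trans_eq (hc i hi))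
  have hmain : ∀ i, Fil i = Filhat i :=
    filtration_eq_of_hodge_eq Fil Filhat hle a c ha hGtop hc hGbot hEq
  refine ⟨hmain, fun i => ?_⟩
  rw [hmain i, Submodule.map_le_iff_le_comap, hFilhat i]
  have h := iInf_le (fun k : ℕ => (Fil (i - k)).comap (N ^ k)) 1
  simpa using h
end

section
/- The evaluation map f : M[e]^{τ̃=1} → M, f(P) = P(0), is injective and its image is exactly M^log; moreover its inverse g : M^log → M[e]^{τ̃=1} is given by g(x) = Σ_{n≥0} (e^n/n!)·(−log τ)^n(x), a finite sum for each x ∈ M^log. -/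
/-- For a linear automorphism `τ` of `M`, `(log τ) x = Σ_{k ≥ 1} (−1)^{k−1}/k • (τ−1)^k x`
(a finite sum — hence a well-defined `finsum` — whenever `(τ−1)^n x = 0` for some `n`,
i.e. on the locally unipotent part `M^log`). -/
noncomputable def logOf {F M : Type*} [Field F] [CharZero F] [AddCommGroup M] [Module F M]
    (τ : M ≃ₗ[F] M) : M → M := fun x =>
  ∑ᶠ k : ℕ, ((-1 : F) ^ k / (k + 1 : F)) • ((τ.toLinearMap - 1) ^ (k + 1)) x

/-- The operator `τ̃` on `M[e]`, sending `Σ_k a_k e^k` to `Σ_k τ(a_k) (e+1)^k`: apply `τ`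
to the coefficients and substitute `e ↦ e + 1`. -/
noncomputable def tauTilde {F M : Type*} [Field F] [CharZero F] [AddCommGroup M] [Module F M]
    (τ : M ≃ₗ[F] M) : PolynomialModule F M →ₗ[F] PolynomialModule F M :=
  (PolynomialModule.comp (Polynomial.X + 1)).comp (PolynomialModule.map F τ.toLinearMap)

/-- The candidate inverse `g(x) = Σ_{n ≥ 0} (e^n / n!) • (−log τ)^n x` of the evaluation
map `f(P) = P(0)`. -/
noncomputable def invOfEval {F M : Type*} [Field F] [CharZero F] [AddCommGroup M] [Module F M]
    (τ : M ≃ₗ[F] M) : M → PolynomialModule F M := fun x =>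
  ∑ᶠ n : ℕ, PolynomialModule.single F n
    ((n.factorial : F)⁻¹ • (fun y => -logOf τ y)^[n] x)



open Polynomial Finset

section PolyPart

variable (F : Type*) [Field F] [CharZero F]

noncomputable def lpoly (N : ℕ) : F[X] :=
  ∑ k ∈ range N, C ((-1 : F) ^ k / (k + 1 : F)) * X ^ (k + 1)

noncomputable def epoly (N : ℕ) : F[X] :=
  ∑ n ∈ range N, C ((-1 : F) ^ n / (n.factorial : F)) * (lpoly F N) ^ n


set_option linter.unusedSectionVars false

omit [CharZero F] in
lemma X_dvd_lpoly (N : ℕ) : X ∣ lpoly F N := by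
  refine Finset.dvd_sum fun k _ => ?_
  exact Dvd.dvd.mul_left (dvd_pow_self X (Nat.succ_ne_zero k)) _

lemma neg_X_pow (k : ℕ) : (-X : F[X]) ^ k = C ((-1 : F) ^ k) * X ^ k := by
  rw [neg_pow, map_pow, map_neg, map_one]

lemma derivative_lpoly (N : ℕ) :
    derivative (lpoly F N) = ∑ k ∈ range N, (-X : F[X]) ^ k := by
  rw [lpoly, derivative_sum]
  refine Finset.sum_congr rfl fun k _ => ?_
  rw [derivative_C_mul_X_pow, Nat.add_sub_cancel, neg_X_pow]
  congr 1
  have hk : ((k : F) + 1) ≠ 0 := Nat.cast_add_one_ne_zero k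
  push_cast
  exact congrArg C (div_mul_cancel₀ _ hk)

lemma one_add_X_mul_derivative_lpoly (N : ℕ) :
    (1 + X) * derivative (lpoly F N) = 1 - (-X : F[X]) ^ N := by
  have h := geom_sum_mul (-X : F[X]) N
  rw [derivative_lpoly]
  have h2 : (1 + X) * ∑ k ∈ range N, (-X : F[X]) ^ k
      = -((∑ k ∈ range N, (-X : F[X]) ^ k) * ((-X : F[X]) - 1)) := by ring
  rw [h2, h]
  ring

lemma derivative_epoly (m : ℕ) :
    derivative (epoly F (m + 1)) = derivative (lpoly F (m + 1)) *
      (C ((-1 : F) ^ m / (m.factorial : F)) * (lpoly F (m + 1)) ^ m - epoly F (m + 1)) := by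
  set lp := lpoly F (m + 1) with hlp
  rw [epoly, derivative_sum]
  have key : ∀ n ∈ range (m + 1), derivative (C ((-1 : F) ^ n / (n.factorial : F)) * lp ^ n)
      = C ((-1 : F) ^ n / (n.factorial : F)) * (C (n : F) * lp ^ (n - 1) * derivative lp) := by
    intro n _
    rw [derivative_C_mul, derivative_pow]
  rw [Finset.sum_congr rfl key, Finset.sum_range_succ']
  simp only [Nat.cast_zero, map_zero, zero_mul, mul_zero, add_zero, pow_zero]
  have term : ∀ j : ℕ, C ((-1 : F) ^ (j + 1) / ((j + 1).factorial : F)) *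
      (C (((j + 1 : ℕ) : F)) * lp ^ (j + 1 - 1) * derivative lp)
      = derivative lp * -(C ((-1 : F) ^ j / (j.factorial : F)) * lp ^ j) := by
    intro j
    have hab : (-1 : F) ^ (j + 1) / ((j + 1).factorial : F) * ((j + 1 : ℕ) : F)
        = -((-1 : F) ^ j / (j.factorial : F)) := by
      rw [Nat.factorial_succ]
      have h1 : ((j : F) + 1) ≠ 0 := Nat.cast_add_one_ne_zero j
      have h2 : ((j.factorial : F)) ≠ 0 := Nat.cast_ne_zero.mpr (Nat.factorial_ne_zero j)
      push_cast
      field_simp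
      ring
    rw [Nat.add_sub_cancel, show C ((-1 : F) ^ (j + 1) / ((j + 1).factorial : F)) *
        (C (((j + 1 : ℕ) : F)) * lp ^ j * derivative lp)
      = C ((-1 : F) ^ (j + 1) / ((j + 1).factorial : F) * ((j + 1 : ℕ) : F))
        * (lp ^ j * derivative lp) by rw [C_mul]; ring, hab, map_neg]
    ring
  rw [Finset.sum_congr rfl fun j _ => term j, ← Finset.mul_sum, Finset.sum_neg_distrib]
  rw [← hlp]
  have hsum : ∑ n ∈ range (m + 1), C ((-1 : F) ^ n / (n.factorial : F)) * lp ^ n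
      = (∑ j ∈ range m, C ((-1 : F) ^ j / (j.factorial : F)) * lp ^ j)
      + C ((-1 : F) ^ m / (m.factorial : F)) * lp ^ m := Finset.sum_range_succ _ _
  rw [hsum]
  ring

lemma keyPoly (m : ℕ) :
    (X : F[X]) ^ (m + 1) ∣ (1 + X) * epoly F (m + 1) - 1 := by
  set N := m + 1 with hN
  set lp := lpoly F N with hlp
  set Ep := epoly F N with hEp
  set Tm := C ((-1 : F) ^ m / (m.factorial : F)) * lp ^ m with hTm
  have hD : derivative ((1 + X) * Ep - 1)
      = Tm - (-X : F[X]) ^ N * (Tm - Ep) := by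
    rw [derivative_sub, derivative_one, derivative_mul, derivative_add, derivative_one,
      derivative_X, sub_zero, zero_add, one_mul]
    rw [hEp, hN, derivative_epoly]
    rw [← hEp, ← hTm]
    rw [show (1 + X) * (derivative lp * (Tm - Ep)) = ((1 + X) * derivative lp) * (Tm - Ep)
      from by ring, one_add_X_mul_derivative_lpoly]
    rw [hN]
    ring
  rw [X_pow_dvd_iff]
  intro d hd
  match d with
  | 0 =>
    have hlp0 : lp.eval 0 = 0 := by
      rcases X_dvd_lpoly F N with ⟨c, hc⟩
      rw [hlp, hc]; simp
    have hEp0 : Ep.eval 0 = 1 := by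
      rw [hEp, epoly, eval_finset_sum, Finset.sum_eq_single 0]
      · simp
      · intro n _ hn
        rw [eval_mul, eval_pow, ← hlp, hlp0, zero_pow hn, mul_zero]
      · simp
    rw [coeff_zero_eq_eval_zero, eval_sub, eval_mul, eval_add, eval_one, eval_X, hEp0]
    ring
  | (j + 1) =>
    have hj : ((j : F) + 1) ≠ 0 := Nat.cast_add_one_ne_zero j
    have hderiv := coeff_derivative ((1 + X) * Ep - 1) j
    rw [hD] at hderiv
    have hTmc : Tm.coeff j = 0 := by
      have hdvd : (X : F[X]) ^ m ∣ Tm := by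
        exact Dvd.dvd.mul_left (pow_dvd_pow_of_dvd (X_dvd_lpoly F N) m) _
      exact X_pow_dvd_iff.mp hdvd j (by omega)
    have hXN : ((-X : F[X]) ^ N * (Tm - Ep)).coeff j = 0 := by
      have hdvd : (X : F[X]) ^ N ∣ (-X : F[X]) ^ N * (Tm - Ep) := by
        refine Dvd.dvd.mul_right ?_ _
        rw [neg_pow]
        exact Dvd.dvd.mul_left dvd_rfl _
      exact X_pow_dvd_iff.mp hdvd j (by omega)
    rw [coeff_sub, hTmc, hXN, sub_zero] at hderiv
    rcases mul_eq_zero.mp hderiv.symm with h | h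
    · exact h
    · exact absurd h hj

end PolyPart

section EndPart

variable {F M : Type*} [Field F] [CharZero F] [AddCommGroup M] [Module F M]
  (τ : M ≃ₗ[F] M)

local notation "u" => (τ.toLinearMap - 1 : Module.End F M)

lemma aeval_commute (p q : F[X]) :
    (aeval (u) p) * (aeval (u) q) = (aeval (u) q) * (aeval (u) p) := by
  rw [← map_mul, ← map_mul, mul_comm]

lemma one_add_u : (1 : Module.End F M) + (τ.toLinearMap - 1) = τ.toLinearMap := by abel

lemma u_pow_apply_aeval {N : ℕ} {x : M} (hx : ((u) ^ N) x = 0) (p : F[X]) :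
    ((u) ^ N) ((aeval (u) p) x) = 0 := by
  have h2 : (u) ^ N * aeval (u) p = aeval (u) p * (u) ^ N := by
    have h3 := aeval_commute τ ((X : F[X]) ^ N) p
    rwa [map_pow, aeval_X] at h3
  rw [show ((u) ^ N) ((aeval (u) p) x) = ((u) ^ N * aeval (u) p) x from rfl, h2,
    Module.End.mul_apply, hx, map_zero]

lemma aeval_pow_eq_zero {N n : ℕ} {x : M} (hx : ((u) ^ N) x = 0) {p : F[X]}
    (hp : X ∣ p) (hn : N ≤ n) : ((aeval (u) p) ^ n) x = 0 := by
  obtain ⟨h, rfl⟩ := hp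
  have hxn : ((u) ^ n) x = 0 := by
    have h1 : (u) ^ n = (u) ^ (n - N) * (u) ^ N := by
      rw [← pow_add, Nat.sub_add_cancel hn]
    rw [h1, Module.End.mul_apply, hx, map_zero]
  have h2 : (aeval (u) (X * h)) ^ n = (aeval (u) h) ^ n * (u) ^ n := by
    rw [← map_pow, show ((X : F[X]) * h) ^ n = h ^ n * X ^ n from by ring, map_mul,
      map_pow, map_pow, aeval_X]
  rw [h2, Module.End.mul_apply, hxn, map_zero]

lemma logOf_eq_aeval {N : ℕ} {x : M} (hx : ((u) ^ N) x = 0) :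
    logOf τ x = (aeval (u) (lpoly F N)) x := by
  rw [logOf]
  have hsupp : (Function.support fun k : ℕ =>
      ((-1 : F) ^ k / (k + 1 : F)) • ((u) ^ (k + 1)) x) ⊆ ↑(range N) := by
    intro k hk
    simp only [Function.mem_support] at hk
    simp only [coe_range, Set.mem_Iio]
    by_contra h
    push_neg at h
    apply hk
    have : (u) ^ (k + 1) = (u) ^ (k + 1 - N) * (u) ^ N := by
      rw [← pow_add, Nat.sub_add_cancel (by omega)]
    rw [this]
    show _ • ((u) ^ (k + 1 - N)) (((u) ^ N) x) = (0 : M)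
    rw [hx, map_zero, smul_zero]
  rw [finsum_eq_sum_of_support_subset _ hsupp, lpoly, map_sum]
  rw [LinearMap.coe_sum, Finset.sum_apply]
  refine Finset.sum_congr rfl fun k _ => ?_
  rw [map_mul, aeval_C, map_pow, aeval_X]
  show _ = (((-1 : F) ^ k / (k + 1 : F)) • ((u) ^ (k + 1))) x
  rw [LinearMap.smul_apply]

lemma iterate_neg_logOf {N : ℕ} {x : M} (hx : ((u) ^ N) x = 0) (n : ℕ) :
    (fun y => -logOf τ y)^[n] x = ((-(aeval (u) (lpoly F N))) ^ n) x := by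
  induction n with
  | zero => simp
  | succ n ih =>
    rw [Function.iterate_succ_apply', ih]
    have hy : ((u) ^ N) ((((-(aeval (u) (lpoly F N)))) ^ n) x) = 0 := by
      have : (-(aeval (u) (lpoly F N))) ^ n = aeval (u) ((-(lpoly F N)) ^ n) := by
        rw [map_pow, map_neg]
      rw [this]
      exact u_pow_apply_aeval τ hx _
    rw [logOf_eq_aeval τ hy]
    have : (-(aeval (u) (lpoly F N))) ^ (n + 1)
        = -(aeval (u) (lpoly F N)) * (-(aeval (u) (lpoly F N))) ^ n := by
      rw [pow_succ']
    rw [this]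
    rfl

lemma key_exp {m : ℕ} {y : M} (hy : ((u) ^ (m + 1)) y = 0) :
    τ.toLinearMap ((aeval (u) (epoly F (m + 1))) y) = y := by
  obtain ⟨g, hg⟩ := keyPoly F m
  have hg' : (1 + X) * epoly F (m + 1) = 1 + g * X ^ (m + 1) := by
    linear_combination hg
  have h2 := congrArg (aeval (u)) hg'
  simp only [map_mul, map_add, map_one, map_pow, aeval_X] at h2
  rw [one_add_u] at h2
  have happ := DFunLike.congr_fun h2 y
  rw [Module.End.mul_apply] at happ
  rw [LinearMap.add_apply, Module.End.one_apply, Module.End.mul_apply, hy, map_zero,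
    add_zero] at happ
  exact happ

lemma neg_aeval_pow_eq_zero {N n : ℕ} {x : M} (hx : ((u) ^ N) x = 0) (hn : N ≤ n) :
    ((-(aeval (u) (lpoly F N))) ^ n) x = 0 := by
  have : -(aeval (u) (lpoly F N)) = aeval (u) (-(lpoly F N)) := by rw [map_neg]
  rw [this]
  exact aeval_pow_eq_zero τ hx (dvd_neg.mpr (X_dvd_lpoly F N)) hn

end EndPart

section ModulePart

variable {F M : Type*} [Field F] [CharZero F] [AddCommGroup M] [Module F M]
  (τ : M ≃ₗ[F] M)

local notation "u" => (τ.toLinearMap - 1 : Module.End F M)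

lemma pm_map_apply (f : M →ₗ[F] M) (q : PolynomialModule F M) (k : ℕ) :
    (PolynomialModule.map F f q).coeff k = f (q.coeff k) := rfl

lemma pm_eq_sum_single (q : PolynomialModule F M) :
    q = ∑ n ∈ q.coeff.support, PolynomialModule.single F n (q.coeff n) := by
  ext1
  simp only [PolynomialModule.coeff_sum, PolynomialModule.coeff_single]
  exact (Finsupp.sum_single q.coeff).symm

lemma pm_map_id (q : PolynomialModule F M) :
    PolynomialModule.map F (LinearMap.id : M →ₗ[F] M) q = q :=
  PolynomialModule.ext (Finsupp.ext fun _ => rfl)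

lemma comp_map_comm (p : F[X]) (f : M →ₗ[F] M) (q : PolynomialModule F M) :
    PolynomialModule.comp p (PolynomialModule.map F f q)
      = PolynomialModule.map F f (PolynomialModule.comp p q) := by
  induction q using PolynomialModule.induction_linear with
  | zero => simp
  | add a b ha hb => simp only [map_add, ha, hb]
  | single n m =>
    rw [PolynomialModule.map_single, PolynomialModule.comp_single,
      PolynomialModule.comp_single, PolynomialModule.map_smul,
      PolynomialModule.map_single, Algebra.algebraMap_self, Polynomial.map_id]

lemma pm_map_map (f g : M →ₗ[F] M) (q : PolynomialModule F M) :
    PolynomialModule.map F f (PolynomialModule.map F g q)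
      = PolynomialModule.map F (f ∘ₗ g) q := by
  induction q using PolynomialModule.induction_linear with
  | zero => simp
  | add a b ha hb => simp only [map_add, ha, hb]
  | single n m => simp [PolynomialModule.map_single]

lemma comp_X_add_one_coeff (q : PolynomialModule F M) (k : ℕ) :
    (PolynomialModule.comp (X + 1) q).coeff k
      = ∑ n ∈ q.coeff.support, ((n.choose k : F)) • q.coeff n := by
  conv_lhs => rw [pm_eq_sum_single q, map_sum]
  rw [PolynomialModule.coeff_sum, Finsupp.finset_sum_apply]
  refine Finset.sum_congr rfl fun n _ => ?_
  rw [PolynomialModule.comp_single, PolynomialModule.smul_single_apply]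
  rw [if_pos (Nat.zero_le k), Nat.sub_zero, coeff_X_add_one_pow]

lemma tauTilde_sum_single (s : Finset ℕ) (c : ℕ → M) (k : ℕ) :
    (tauTilde τ (∑ n ∈ s, PolynomialModule.single F n (c n))).coeff k
      = ∑ n ∈ s, ((n.choose k : F)) • τ (c n) := by
  rw [map_sum, PolynomialModule.coeff_sum, Finsupp.finset_sum_apply]
  refine Finset.sum_congr rfl fun n _ => ?_
  rw [tauTilde, LinearMap.comp_apply, PolynomialModule.map_single,
    PolynomialModule.comp_single, PolynomialModule.smul_single_apply]
  rw [if_pos (Nat.zero_le k), Nat.sub_zero, coeff_X_add_one_pow]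
  rfl

lemma eval_tauTilde (q : PolynomialModule F M) (r : F) :
    PolynomialModule.eval r (tauTilde τ q) = τ (PolynomialModule.eval (r + 1) q) := by
  rw [tauTilde, LinearMap.comp_apply, PolynomialModule.comp_eval]
  simp only [eval_add, eval_X, eval_one]
  rw [PolynomialModule.eval_map']
  rfl

/-- A fixed point of `tauTilde` evaluating to `0` at `0` is `0`. -/
lemma fixed_eval_zero_eq_zero (q : PolynomialModule F M) (hq : tauTilde τ q = q)
    (h0 : PolynomialModule.eval (0 : F) q = 0) : q = 0 := by
  have hnat : ∀ n : ℕ, PolynomialModule.eval ((n : F)) q = 0 := by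
    intro n
    induction n with
    | zero => simpa using h0
    | succ n ih =>
      have := eval_tauTilde τ q (n : F)
      rw [hq, ih] at this
      have h2 : τ (PolynomialModule.eval ((n : F) + 1) q) = 0 := this.symm
      have := τ.injective (by simpa using h2)
      simpa [Nat.cast_add] using this
  -- use dual functionals
  have hco : ∀ k : ℕ, q.coeff k = 0 := by
    intro k
    rw [← Module.forall_dual_apply_eq_zero_iff F]
    intro φ
    set p : F[X] := ∑ j ∈ q.coeff.support, C (φ (q.coeff j)) * X ^ j with hp
    have hpe : ∀ r : F, p.eval r = φ (PolynomialModule.eval r q) := by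
      intro r
      rw [hp, eval_finset_sum]
      rw [PolynomialModule.eval_apply, Finsupp.sum, map_sum]
      refine Finset.sum_congr rfl fun j _ => ?_
      rw [eval_mul, eval_C, eval_pow, eval_X, map_smul, smul_eq_mul, mul_comm]
  -- p has infinitely many roots
    have hproots : p = 0 := by
      refine Polynomial.eq_zero_of_infinite_isRoot p ?_
      apply Set.infinite_of_injective_forall_mem
        (f := fun n : ℕ => (n : F)) Nat.cast_injective
      intro n
      simp only [Set.mem_setOf_eq, IsRoot.def]
      rw [hpe, hnat]
      exact map_zero φ
    have hcoeff := congrArg (fun pp : F[X] => pp.coeff k) hproots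
    simp only [coeff_zero] at hcoeff
    rw [hp, finset_sum_coeff] at hcoeff
    simp only [coeff_C_mul, coeff_X_pow, mul_ite, mul_one, mul_zero] at hcoeff
    rw [Finset.sum_ite_eq q.coeff.support k (fun j => φ (q.coeff j))] at hcoeff
    by_cases hk : k ∈ q.coeff.support
    · rw [if_pos hk] at hcoeff; exact hcoeff
    · rw [Finsupp.notMem_support_iff.mp hk, map_zero]
  exact PolynomialModule.ext (Finsupp.ext hco)

/-- fixed points evaluate into the locally unipotent part -/
lemma fixed_eval_mem_log (q : PolynomialModule F M) (hq : tauTilde τ q = q) :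
    ∃ n : ℕ, ((u) ^ n) (PolynomialModule.eval (0 : F) q) = 0 := by
  -- strong claim by induction on degree bound
  suffices H : ∀ d : ℕ, ∀ q : PolynomialModule F M, tauTilde τ q = q →
      (∀ k, d ≤ k → q.coeff k = 0) → ((u) ^ d) (PolynomialModule.eval (0 : F) q) = 0 by
    refine ⟨q.coeff.support.sup id + 1, H _ q hq fun k hk => ?_⟩
    by_contra h
    have := Finset.le_sup (f := id) (Finsupp.mem_support_iff.mpr h)
    simp only [id] at this
    omega
  intro d
  induction d with
  | zero =>
    intro q hq hsupp
    have : q = 0 := PolynomialModule.ext (Finsupp.ext fun k => hsupp k (Nat.zero_le k))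
    rw [this]
    simp
  | succ d ih =>
    intro q hq hsupp
    set w : M →ₗ[F] M := τ.symm.toLinearMap - LinearMap.id with hw
    -- comp (X+1) q = map τ⁻¹ q
    have hcomp : PolynomialModule.comp (X + 1) q
        = PolynomialModule.map F τ.symm.toLinearMap q := by
      have h1 : τ.symm.toLinearMap ∘ₗ τ.toLinearMap = LinearMap.id := by
        ext z; simp
      conv_rhs => rw [← hq]
      rw [tauTilde, LinearMap.comp_apply, comp_map_comm, pm_map_map, h1, pm_map_id]
    set q' : PolynomialModule F M := PolynomialModule.map F w q with hq'
    have hq'_coeff : ∀ k, q'.coeff k = τ.symm (q.coeff k) - q.coeff k := by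
      intro k
      rw [hq', pm_map_apply, hw]
      simp
    -- fixedness of q'
    have hfix' : tauTilde τ q' = q' := by
      have hcommwτ : τ.toLinearMap ∘ₗ w = w ∘ₗ τ.toLinearMap := by
        refine LinearMap.ext fun z => ?_
        simp [hw]
      rw [hq', tauTilde, LinearMap.comp_apply, pm_map_map, hcommwτ, ← pm_map_map,
        comp_map_comm]
      rw [show PolynomialModule.comp (X + 1) (PolynomialModule.map F τ.toLinearMap q)
        = tauTilde τ q from rfl, hq]
    -- support of q'
    have hsupp' : ∀ k, d ≤ k → q'.coeff k = 0 := by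
      intro k hk
      have hck := congrArg (fun qq : PolynomialModule F M => qq.coeff k) hcomp
      rw [comp_X_add_one_coeff, pm_map_apply] at hck
      have hsum : ∑ n ∈ q.coeff.support, ((n.choose k : F)) • q.coeff n = q.coeff k := by
        rcases Nat.lt_or_ge k (d + 1) with hkd | hkd
        · -- k = d exactly
          have hkd' : k = d := by omega
          rw [Finset.sum_eq_single k]
          · simp
          · intro n hn hne
            have hn1 : n < d + 1 := by
              by_contra hc
              exact (Finsupp.mem_support_iff.mp hn) (hsupp n (by omega))
            rw [Nat.choose_eq_zero_of_lt (by omega)]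
            simp
          · intro hk'
            rw [Finsupp.notMem_support_iff.mp hk']
            simp
        · -- k ≥ d+1 : both sides are 0
          rw [hsupp k hkd]
          refine Finset.sum_eq_zero fun n hn => ?_
          have : n < d + 1 := by
            by_contra hc
            exact (Finsupp.mem_support_iff.mp hn) (hsupp n (by omega))
          rw [Nat.choose_eq_zero_of_lt (by omega)]
          simp
      rw [hsum] at hck
      rw [hq'_coeff k]
      exact sub_eq_zero.mpr hck.symm
    have hih := ih q' hfix' hsupp'
    have heval' : PolynomialModule.eval (0 : F) q' = w (PolynomialModule.eval (0 : F) q) := by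
      rw [hq']
      rw [PolynomialModule.eval_map']
    rw [heval'] at hih
    -- u^(d+1) y = -(τ ∘ u^d ∘ w) y
    set y := PolynomialModule.eval (0 : F) q with hy
    have hcomm : Commute ((u) ^ d) τ.toLinearMap :=
      (Commute.pow_left ((Commute.refl τ.toLinearMap).sub_left (Commute.one_left _)) d)
    have huy : (u) y = -(τ.toLinearMap ((w) y)) := by
      simp [hw]
    have : ((u) ^ (d + 1)) y = ((u) ^ d) ((u) y) := by
      rw [pow_succ]
      rfl
    rw [this, huy, map_neg, ← Module.End.mul_apply, hcomm.eq, Module.End.mul_apply, hih,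
      map_zero, neg_zero]

end ModulePart

section MainPart

variable {F M : Type*} [Field F] [CharZero F] [AddCommGroup M] [Module F M]
  (τ : M ≃ₗ[F] M)

local notation "u" => (τ.toLinearMap - 1 : Module.End F M)

lemma main_part3 {x : M} {m : ℕ} (hx : ((u) ^ (m + 1)) x = 0) :
    (Function.support fun n : ℕ => PolynomialModule.single F n
        ((n.factorial : F)⁻¹ • (fun y => -logOf τ y)^[n] x)).Finite ∧
    tauTilde τ (invOfEval τ x) = invOfEval τ x ∧
    PolynomialModule.eval (0 : F) (invOfEval τ x) = x := by
  set L : Module.End F M := aeval (u) (lpoly F (m + 1)) with hL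
  set c : ℕ → M := fun n => (n.factorial : F)⁻¹ • ((-L) ^ n) x with hc
  have hfun : (fun n : ℕ => PolynomialModule.single F n
      ((n.factorial : F)⁻¹ • (fun y => -logOf τ y)^[n] x))
      = fun n => PolynomialModule.single F n (c n) := by
    funext n
    rw [iterate_neg_logOf τ hx n]
  have hc0 : ∀ n, m + 1 ≤ n → c n = 0 := by
    intro n hn
    rw [hc]
    simp only
    rw [neg_aeval_pow_eq_zero τ hx hn, smul_zero]
  have hsupp : (Function.support fun n => PolynomialModule.single F n (c n))
      ⊆ ↑(range (m + 1)) := by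
    intro n hn
    simp only [Function.mem_support] at hn
    simp only [coe_range, Set.mem_Iio]
    by_contra h
    push_neg at h
    exact hn (by rw [hc0 n h, PolynomialModule.single_zero])
  have hfin : (Function.support fun n : ℕ => PolynomialModule.single F n
      ((n.factorial : F)⁻¹ • (fun y => -logOf τ y)^[n] x)).Finite := by
    rw [hfun]
    exact (range (m + 1)).finite_toSet.subset hsupp
  have hrepr : invOfEval τ x = ∑ n ∈ range (m + 1), PolynomialModule.single F n (c n) := by
    rw [invOfEval, hfun]
    exact finsum_eq_sum_of_support_subset _ hsupp
  have hy' : ∀ k : ℕ, ((u) ^ (m + 1)) (((-L) ^ k) x) = 0 := by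
    intro k
    have : (-L) ^ k = aeval (u) ((-(lpoly F (m + 1))) ^ k) := by
      rw [map_pow, map_neg, hL]
    rw [this]
    exact u_pow_apply_aeval τ hx _
  have hE : ∀ z : M, (aeval (u) (epoly F (m + 1))) z
      = ∑ i ∈ range (m + 1), (i.factorial : F)⁻¹ • ((-L) ^ i) z := by
    intro z
    rw [epoly, map_sum, LinearMap.coe_sum, Finset.sum_apply]
    refine Finset.sum_congr rfl fun i _ => ?_
    rw [map_mul, aeval_C, map_pow, ← hL]
    have hneg : (-L) ^ i = ((-1 : F) ^ i) • L ^ i := by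
      rw [← neg_one_smul F L, _root_.smul_pow]
    rw [hneg]
    show (algebraMap F (Module.End F M) ((-1 : F) ^ i / (i.factorial : F)) * L ^ i) z
      = (i.factorial : F)⁻¹ • ((-1 : F) ^ i • (L ^ i)) z
    rw [Module.End.mul_apply, Module.algebraMap_end_apply, LinearMap.smul_apply, smul_smul,
      div_eq_mul_inv, mul_comm]
  have heval : PolynomialModule.eval (0 : F) (invOfEval τ x) = x := by
    rw [hrepr, map_sum, Finset.sum_eq_single 0]
    · rw [PolynomialModule.eval_single, pow_zero, one_smul, hc]
      simp
    · intro n _ hn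
      rw [PolynomialModule.eval_single, zero_pow hn, zero_smul]
    · intro h
      exact absurd (Finset.mem_range.mpr (by omega)) h
  refine ⟨hfin, ?_, heval⟩
  rw [hrepr]
  refine PolynomialModule.ext (Finsupp.ext fun k => ?_)
  rw [tauTilde_sum_single]
  have hrhs : (∑ n ∈ range (m + 1), PolynomialModule.single F n (c n)).coeff k
      = if k ∈ range (m + 1) then c k else 0 := by
    rw [PolynomialModule.coeff_sum, Finsupp.finset_sum_apply]
    rw [← Finset.sum_ite_eq' (range (m + 1)) k c]
    refine Finset.sum_congr rfl fun n _ => ?_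
    rw [PolynomialModule.coeff_single, Finsupp.single_apply]
  rw [hrhs]
  by_cases hk : k ∈ range (m + 1)
  · rw [if_pos hk]
    have hkm : k < m + 1 := Finset.mem_range.mp hk
    set y : M := ((-L) ^ k) x with hy
    have hstep1 : ∑ n ∈ range (m + 1), ((n.choose k : ℕ) : F) • τ (c n)
        = ∑ n ∈ Ico k (m + 1), ((n.choose k : ℕ) : F) • τ (c n) := by
      refine (Finset.sum_subset ?_ ?_).symm
      · intro n hn
        simp only [Finset.mem_Ico] at hn
        exact Finset.mem_range.mpr hn.2
      · intro n hn hnot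
        simp only [Finset.mem_range] at hn
        simp only [Finset.mem_Ico, not_and, not_le] at hnot
        rcases Nat.lt_or_ge n k with hnk | hnk
        · rw [Nat.choose_eq_zero_of_lt hnk]
          simp
        · exact absurd (hnot hnk) (by omega)
    rw [hstep1, Finset.sum_Ico_eq_sum_range]
    have hterm : ∀ i ∈ range (m + 1 - k), (((k + i).choose k : ℕ) : F) • τ (c (k + i))
        = (k.factorial : F)⁻¹ • ((i.factorial : F)⁻¹ • τ (((-L) ^ i) y)) := by
      intro i _
      have hfk : ((k.factorial : ℕ) : F) ≠ 0 := Nat.cast_ne_zero.mpr (Nat.factorial_ne_zero _)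
      have hfi : ((i.factorial : ℕ) : F) ≠ 0 := Nat.cast_ne_zero.mpr (Nat.factorial_ne_zero _)
      have hfki : (((k + i).factorial : ℕ) : F) ≠ 0 :=
        Nat.cast_ne_zero.mpr (Nat.factorial_ne_zero _)
      have hsc : (((k + i).choose k : ℕ) : F) * (((k + i).factorial : ℕ) : F)⁻¹
          = ((k.factorial : ℕ) : F)⁻¹ * ((i.factorial : ℕ) : F)⁻¹ := by
        have h0 := Nat.add_choose_mul_factorial_mul_factorial i k
        rw [Nat.add_comm i k] at h0
        have h : (((k + i).choose k : ℕ) : F) * ((i.factorial : ℕ) : F)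
            * ((k.factorial : ℕ) : F) = (((k + i).factorial : ℕ) : F) := by
          exact_mod_cast congrArg (fun t : ℕ => (t : F)) h0
        field_simp
        linear_combination h
      have hpow : ((-L) ^ (k + i)) x = ((-L) ^ i) y := by
        rw [hy, show k + i = i + k from by omega, pow_add, Module.End.mul_apply]
      rw [hc]
      simp only
      rw [hpow, map_smul, smul_smul, hsc, ← smul_smul]
    rw [Finset.sum_congr rfl hterm, ← Finset.smul_sum]
    have hext : ∑ i ∈ range (m + 1 - k), (i.factorial : F)⁻¹ • τ (((-L) ^ i) y)
        = ∑ i ∈ range (m + 1), (i.factorial : F)⁻¹ • τ (((-L) ^ i) y) := by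
      refine Finset.sum_subset ?_ ?_
      · intro i hi
        simp only [Finset.mem_range] at hi ⊢
        omega
      · intro i hi hnot
        simp only [Finset.mem_range, not_lt] at hnot
        have : ((-L) ^ i) y = 0 := by
          rw [hy, ← Module.End.mul_apply, ← pow_add]
          exact neg_aeval_pow_eq_zero τ hx (by omega)
        rw [this, map_zero, smul_zero]
    rw [hext]
    have hsum_tau : ∑ i ∈ range (m + 1), (i.factorial : F)⁻¹ • τ (((-L) ^ i) y)
        = τ.toLinearMap ((aeval (u) (epoly F (m + 1))) y) := by
      rw [hE]
      rw [map_sum]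
      refine Finset.sum_congr rfl fun i _ => ?_
      rw [map_smul]
      rfl
    rw [hsum_tau, key_exp τ (hy' k)]
  · rw [if_neg hk]
    refine Finset.sum_eq_zero fun n hn => ?_
    have : n < k := by
      simp only [Finset.mem_range] at hn hk
      omega
    rw [Nat.choose_eq_zero_of_lt this]
    simp

theorem eval_injOn_image_eq_locallyUnipotent' :
    Set.InjOn (PolynomialModule.eval (0 : F)) {q | tauTilde τ q = q} ∧
    PolynomialModule.eval (0 : F) '' {q | tauTilde τ q = q} =
      {x : M | ∃ n : ℕ, ((τ.toLinearMap - 1) ^ n) x = 0} ∧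
    (∀ x : M, (∃ n : ℕ, ((τ.toLinearMap - 1) ^ n) x = 0) →
      (Function.support fun n : ℕ => PolynomialModule.single F n
          ((n.factorial : F)⁻¹ • (fun y => -logOf τ y)^[n] x)).Finite ∧
      tauTilde τ (invOfEval τ x) = invOfEval τ x ∧
      PolynomialModule.eval (0 : F) (invOfEval τ x) = x) ∧
    (∀ q : PolynomialModule F M, tauTilde τ q = q →
      invOfEval τ (PolynomialModule.eval (0 : F) q) = q) := by
  have hinj : Set.InjOn (PolynomialModule.eval (0 : F)) {q | tauTilde τ q = q} := by
    intro q1 h1 q2 h2 heq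
    have hfix : tauTilde τ (q1 - q2) = q1 - q2 := by
      rw [map_sub, h1, h2]
    have h0 : PolynomialModule.eval (0 : F) (q1 - q2) = 0 := by
      rw [map_sub, heq, sub_self]
    exact sub_eq_zero.mp (fixed_eval_zero_eq_zero τ _ hfix h0)
  have hpart3 : ∀ x : M, (∃ n : ℕ, ((τ.toLinearMap - 1) ^ n) x = 0) →
      (Function.support fun n : ℕ => PolynomialModule.single F n
          ((n.factorial : F)⁻¹ • (fun y => -logOf τ y)^[n] x)).Finite ∧
      tauTilde τ (invOfEval τ x) = invOfEval τ x ∧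
      PolynomialModule.eval (0 : F) (invOfEval τ x) = x := by
    rintro x ⟨n, hn⟩
    have hx : ((u) ^ (n + 1)) x = 0 := by
      rw [pow_succ', Module.End.mul_apply, hn, map_zero]
    exact main_part3 τ hx
  have himg : PolynomialModule.eval (0 : F) '' {q | tauTilde τ q = q} =
      {x : M | ∃ n : ℕ, ((τ.toLinearMap - 1) ^ n) x = 0} := by
    apply Set.Subset.antisymm
    · rintro y ⟨q, hq, rfl⟩
      exact fixed_eval_mem_log τ q hq
    · intro x hx
      obtain ⟨_, hfix, heval⟩ := hpart3 x hx
      exact ⟨invOfEval τ x, hfix, heval⟩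
  refine ⟨hinj, himg, hpart3, ?_⟩
  intro q hq
  have hmem : PolynomialModule.eval (0 : F) q
      ∈ {x : M | ∃ n : ℕ, ((τ.toLinearMap - 1) ^ n) x = 0} := by
    rw [← himg]
    exact ⟨q, hq, rfl⟩
  obtain ⟨_, hfix, heval⟩ := hpart3 _ hmem
  exact hinj hfix hq heval

end MainPart

/-- Let `M` be a vector space over a field of characteristic `0` and `τ`
a linear automorphism of `M`.  The evaluation map `f : M[e]^{τ̃ = 1} → M`, `f(P) = P(0)`,
is injective and its image is exactly `M^log = {x : (τ−1)^n x = 0 for some n}`; moreover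
its inverse `g : M^log → M[e]^{τ̃ = 1}` is given by
`g(x) = Σ_{n ≥ 0} (e^n / n!) • (−log τ)^n x`, a finite sum for each `x ∈ M^log`. -/
theorem eval_injOn_image_eq_locallyUnipotent
    {F M : Type*} [Field F] [CharZero F] [AddCommGroup M] [Module F M]
    (τ : M ≃ₗ[F] M) :
    Set.InjOn (PolynomialModule.eval (0 : F)) {q | tauTilde τ q = q} ∧
    PolynomialModule.eval (0 : F) '' {q | tauTilde τ q = q} =
      {x : M | ∃ n : ℕ, ((τ.toLinearMap - 1) ^ n) x = 0} ∧
    (∀ x : M, (∃ n : ℕ, ((τ.toLinearMap - 1) ^ n) x = 0) →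
      (Function.support fun n : ℕ => PolynomialModule.single F n
          ((n.factorial : F)⁻¹ • (fun y => -logOf τ y)^[n] x)).Finite ∧
      tauTilde τ (invOfEval τ x) = invOfEval τ x ∧
      PolynomialModule.eval (0 : F) (invOfEval τ x) = x) ∧
    (∀ q : PolynomialModule F M, tauTilde τ q = q →
      invOfEval τ (PolynomialModule.eval (0 : F) q) = q) := by
  exact eval_injOn_image_eq_locallyUnipotent' τ
end

section
/- Suppose there exists an invertible d×d matrix H over R with H·γ(Δ)·H^{−1} = c·Δ. Then the coefficients of the characteristic polynomial of Δ satisfy γ(a_i) = c^{d−i}·a_i for all 0 ≤ i ≤ d−1. If moreover, for every 1 ≤ j ≤ d, the only element r ∈ R satisfying γ(r) = c^j·r is r = 0, then a_i = 0 for all 0 ≤ i ≤ d−1 and consequently Δ^d = 0, i.e. Δ is nilpotent. -/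
open Polynomial Matrix

lemma coeff_comp_C_mul_X {S : Type*} [CommRing S] (p : S[X]) (t : S) (i : ℕ) :
    (p.comp (C t * X)).coeff i = t ^ i * p.coeff i := by
  have key : ∀ (a : S) (e : ℕ), (C a * (C t * X) ^ e).coeff i =
      if e = i then t ^ i * a else 0 := by
    intro a e
    rw [mul_pow, ← C_pow, ← mul_assoc, ← C_mul, coeff_C_mul, coeff_X_pow]
    rcases eq_or_ne e i with rfl | he
    · simp [mul_comm]
    · simp [he, Ne.symm he]
  rw [comp_eq_sum_left, coeff_sum, sum_def]
  rw [Finset.sum_eq_single i]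
  · rw [key, if_pos rfl]
  · intro b _ hb
    rw [key, if_neg hb]
  · intro h
    simp only [Polynomial.notMem_support_iff] at h
    rw [key, if_pos rfl, h, mul_zero]

lemma charpoly_smul_domain {S : Type*} [CommRing S] [IsDomain S] {d : ℕ} (t : S) (ht : t ≠ 0)
    (N : Matrix (Fin d) (Fin d) S) {i : ℕ} (hi : i ≤ d) :
    (t • N).charpoly.coeff i = t ^ (d - i) * N.charpoly.coeff i := by
  have hmat : (charmatrix (t • N)).map (eval₂RingHom C (C t * X)) = C t • charmatrix N := by
    apply Matrix.ext
    intro a b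
    rcases eq_or_ne a b with rfl | hab
    · rw [Matrix.map_apply, Matrix.smul_apply, charmatrix_apply_eq, charmatrix_apply_eq,
        map_sub, coe_eval₂RingHom, eval₂_X, eval₂_C, Matrix.smul_apply, smul_eq_mul,
        smul_eq_mul, mul_sub, ← C_mul]
    · rw [Matrix.map_apply, Matrix.smul_apply, charmatrix_apply_ne _ _ _ hab,
        charmatrix_apply_ne _ _ _ hab, map_neg, coe_eval₂RingHom, eval₂_C,
        Matrix.smul_apply, smul_eq_mul, smul_eq_mul, mul_neg, ← C_mul]
  have hcomp : ((t • N).charpoly).comp (C t * X) = C t ^ d * N.charpoly := by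
    have h := (eval₂RingHom C (C t * X)).map_det (charmatrix (t • N))
    rw [RingHom.mapMatrix_apply, hmat, det_smul, Fintype.card_fin] at h
    simpa [Matrix.charpoly, Polynomial.comp, coe_eval₂RingHom] using h
  have hco := congrArg (fun p => Polynomial.coeff p i) hcomp
  simp only [coeff_comp_C_mul_X, ← C_pow, coeff_C_mul] at hco
  have h2 : t ^ i * ((t • N).charpoly.coeff i) = t ^ i * (t ^ (d - i) * N.charpoly.coeff i) := by
    rw [hco, ← mul_assoc, ← pow_add, Nat.add_sub_cancel' hi]
  exact mul_left_cancel₀ (pow_ne_zero i ht) h2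

lemma charpoly_smul_coeff {R : Type*} [CommRing R] {d : ℕ} (c : R)
    (M : Matrix (Fin d) (Fin d) R) {i : ℕ} (hi : i ≤ d) :
    (c • M).charpoly.coeff i = c ^ (d - i) * M.charpoly.coeff i := by
  set A := MvPolynomial (Option (Fin d × Fin d)) ℤ
  set t : A := MvPolynomial.X none with ht
  set N : Matrix (Fin d) (Fin d) A := Matrix.of fun a b => MvPolynomial.X (some (a, b)) with hN
  set φ : A →+* R := (MvPolynomial.eval₂Hom (Int.castRingHom R)
    (fun o => Option.elim o c (fun p => M p.1 p.2)) : A →+* R) with hφ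
  have hφt : φ t = c := MvPolynomial.eval₂Hom_X' _ _ _
  have hφN : ∀ a b, φ (N a b) = M a b := fun a b => MvPolynomial.eval₂Hom_X' _ _ _
  have htN : (t • N).map φ = c • M := by
    apply Matrix.ext
    intro a b
    rw [Matrix.map_apply, Matrix.smul_apply, Matrix.smul_apply, smul_eq_mul, smul_eq_mul,
      _root_.map_mul, hφt, hφN]
  have hNM : N.map φ = M := by
    apply Matrix.ext
    intro a b
    exact hφN a b
  have key := charpoly_smul_domain t (MvPolynomial.X_ne_zero none) N hi
  have hkey := congrArg φ key
  rw [_root_.map_mul, map_pow] at hkey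
  have h1 : (c • M).charpoly.coeff i = φ ((t • N).charpoly.coeff i) := by
    rw [← htN, Matrix.charpoly_map, coeff_map]
  have h2 : M.charpoly.coeff i = φ (N.charpoly.coeff i) := by
    rw [← hNM, Matrix.charpoly_map, coeff_map]
  rw [h1, hkey, hφt, ← h2]

lemma charpoly_units_conj' {R : Type*} [CommRing R] {n : Type*} [DecidableEq n] [Fintype n]
    (H : (Matrix n n R)ˣ) (B : Matrix n n R) :
    ((H : Matrix n n R) * B * ((H⁻¹ : (Matrix n n R)ˣ) : Matrix n n R)).charpoly = B.charpoly := by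
  have hinv : ((H : Matrix n n R)) * ((H⁻¹ : (Matrix n n R)ˣ) : Matrix n n R) = 1 := by
    exact_mod_cast H.mul_inv
  have hinv' : (((H⁻¹ : (Matrix n n R)ˣ) : Matrix n n R)) * (H : Matrix n n R) = 1 := by
    exact_mod_cast H.inv_mul
  have hmat : charmatrix ((H : Matrix n n R) * B * ((H⁻¹ : (Matrix n n R)ˣ) : Matrix n n R)) =
      (C : R →+* R[X]).mapMatrix (H : Matrix n n R) * charmatrix B *
        (C : R →+* R[X]).mapMatrix ((H⁻¹ : (Matrix n n R)ˣ) : Matrix n n R) := by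
    rw [charmatrix, charmatrix, mul_sub, sub_mul]
    congr 1
    · calc (scalar n) (X : R[X])
          = scalar n X * ((C : R →+* R[X]).mapMatrix (H : Matrix n n R) *
            (C : R →+* R[X]).mapMatrix ((H⁻¹ : (Matrix n n R)ˣ) : Matrix n n R)) := by
            rw [← _root_.map_mul, hinv, _root_.map_one, mul_one]
        _ = (C : R →+* R[X]).mapMatrix (H : Matrix n n R) * scalar n X *
            (C : R →+* R[X]).mapMatrix ((H⁻¹ : (Matrix n n R)ˣ) : Matrix n n R) := by
            rw [← mul_assoc, (Matrix.scalar_commute (X : R[X]) (Commute.all X) _).eq]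
    · rw [_root_.map_mul, _root_.map_mul]
  rw [Matrix.charpoly, hmat, det_mul, det_mul, mul_right_comm, ← det_mul,
    ← _root_.map_mul (C : R →+* R[X]).mapMatrix, hinv, _root_.map_one, det_one, one_mul,
    Matrix.charpoly]



/-- Let `R` be a commutative ring, `γ` a ring automorphism of `R`, and
`c ∈ R` fixed by `γ`.  Let `Δ` be a `d × d` matrix over `R` and suppose there is an
invertible `d × d` matrix `H` over `R` with `H · γ(Δ) · H⁻¹ = c • Δ` (where `γ(Δ)` is
obtained by applying `γ` entrywise).  Writing the characteristic polynomial of `Δ` as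
`λ^d + a_{d−1} λ^{d−1} + ⋯ + a_0`, the coefficients satisfy `γ(a_i) = c^{d−i} · a_i` for
all `0 ≤ i ≤ d − 1`.  If moreover, for every `1 ≤ j ≤ d`, the only `r ∈ R` with
`γ(r) = c^j · r` is `r = 0`, then `a_i = 0` for all `0 ≤ i ≤ d − 1` and consequently
`Δ^d = 0`, i.e. `Δ` is nilpotent. -/
theorem charpoly_coeff_semiinvariant_and_nilpotent
    {R : Type*} [CommRing R] (γ : R ≃+* R) (c : R) (hc : γ c = c)
    {d : ℕ} (Δ : Matrix (Fin d) (Fin d) R)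
    (H : (Matrix (Fin d) (Fin d) R)ˣ)
    (hH : (H : Matrix (Fin d) (Fin d) R) * Δ.map γ * ((H⁻¹ : (Matrix (Fin d) (Fin d) R)ˣ) :
      Matrix (Fin d) (Fin d) R) = c • Δ) :
    (∀ i < d, γ (Δ.charpoly.coeff i) = c ^ (d - i) * Δ.charpoly.coeff i) ∧
    ((∀ j, 1 ≤ j → j ≤ d → ∀ r : R, γ r = c ^ j * r → r = 0) →
      (∀ i < d, Δ.charpoly.coeff i = 0) ∧ Δ ^ d = 0) := by
  have main : ∀ i < d, γ (Δ.charpoly.coeff i) = c ^ (d - i) * Δ.charpoly.coeff i := by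
    intro i hid
    have h1 : (Δ.map γ).charpoly = Δ.charpoly.map (γ : R →+* R) := by
      rw [← Matrix.charpoly_map]
      rfl
    have h2 : (Δ.map γ).charpoly = (c • Δ).charpoly := by
      rw [← hH, _root_.charpoly_units_conj']
    have h3 := congrArg (fun p => Polynomial.coeff p i) (h1.symm.trans h2)
    simp only [coeff_map] at h3
    rw [RingHom.coe_coe] at h3
    rw [h3, charpoly_smul_coeff c Δ hid.le]
  refine ⟨main, fun hvan => ?_⟩
  have hcoeff : ∀ i < d, Δ.charpoly.coeff i = 0 := by
    intro i hid
    exact hvan (d - i) (by omega) (by omega) _ (main i hid)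
  refine ⟨hcoeff, ?_⟩
  rcases subsingleton_or_nontrivial R with hsub | hnt
  · exact Subsingleton.elim _ _
  · have hdeg : Δ.charpoly.natDegree = d := by
      rw [Matrix.charpoly_natDegree_eq_dim, Fintype.card_fin]
    have hlead : Δ.charpoly.coeff d = 1 := by
      have h := Δ.charpoly_monic.coeff_natDegree
      rwa [hdeg] at h
    have hp : Δ.charpoly = X ^ d := by
      ext m
      rcases lt_trichotomy m d with h | rfl | h
      · rw [hcoeff m h, coeff_X_pow, if_neg h.ne]
      · rw [coeff_X_pow, if_pos rfl, hlead]
      · rw [coeff_X_pow, if_neg h.ne', Polynomial.coeff_eq_zero_of_natDegree_lt (by omega)]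
    have h := Δ.aeval_self_charpoly
    rw [hp] at h
    simpa using h
end
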